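/- Assume L is injective and let A := L* ∘ L : X → X. Then for every x ∈ X, the semigroup orbit satisfies ‖exp(−t A) x‖ → 0 as t → ∞, where exp denotes the exponential of bounded operators on X. -/

import Mathlib

set_option maxHeartbeats 1000000
set_option synthInstance.maxHeartbeats 400000

open Filter NormedSpace ContinuousLinearMap
open scoped RealInnerProductSpace Topology

/-- If `L` is injective and `A = L* ∘ L`, then every semigroup
orbit decays: `‖exp(−t A) x‖ → 0` as `t → ∞`, for every `x ∈ X`. -/
theorem exp_orbit_decay
    {X Y : Type*}
    [NormedAddCommGroup X] [InnerProductSpace ℝ X] [CompleteSpace X]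
    [NormedAddCommGroup Y] [InnerProductSpace ℝ Y] [CompleteSpace Y]
    (L : X →L[ℝ] Y) (hL : Function.Injective L)
    (A : X →L[ℝ] X) (hA : A = L.adjoint.comp L) :
    ∀ x : X,
      Filter.Tendsto (fun t : ℝ => ‖(NormedSpace.exp (-(t • A))) x‖)
        Filter.atTop (nhds 0) := by
  intro x
  have hAsa : ContinuousLinearMap.adjoint A = A := by
    rw [hA, ContinuousLinearMap.adjoint_comp, ContinuousLinearMap.adjoint_adjoint]
  have hstar : star A = A := by rw [ContinuousLinearMap.star_eq_adjoint, hAsa]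
  set E : ℝ → (X →L[ℝ] X) := fun t => exp (t • (-A)) with hE
  set u : ℝ → X := fun t => E t x with hu
  have hgoal : (fun t : ℝ => ‖(exp (-(t • A))) x‖) = fun t => ‖u t‖ := by
    funext t
    rw [hu, hE]
    simp [smul_neg]
  rw [hgoal]
  -- semigroup law
  have hsg : ∀ s t : ℝ, E (s + t) = E s * E t := by
    intro s t
    rw [hE]
    simp only [add_smul]
    exact exp_add_of_commute_of_mem_ball (𝕂 := ℝ) (((Commute.refl (-A)).smul_left s).smul_right t)
      ((expSeries_radius_eq_top ℝ (X →L[ℝ] X)).symm ▸ edist_lt_top _ _)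
      ((expSeries_radius_eq_top ℝ (X →L[ℝ] X)).symm ▸ edist_lt_top _ _)
  -- each E t is self-adjoint
  have hEstar : ∀ t : ℝ, star (E t) = E t := by
    intro t
    rw [hE]
    rw [star_exp]
    congr 1
    rw [star_smul, star_neg, hstar, star_trivial]
  -- key inner product identity
  have key : ∀ t s : ℝ, ⟪u t, u s⟫ = ⟪x, u (t + s)⟫ := by
    intro t s
    have h1 : ContinuousLinearMap.adjoint (E t) = E t := by
      rw [← ContinuousLinearMap.star_eq_adjoint, hEstar]
    calc ⟪u t, u s⟫ = ⟪(ContinuousLinearMap.adjoint (E t)) x, E s x⟫ := by rw [h1]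
      _ = ⟪x, E t (E s x)⟫ := ContinuousLinearMap.adjoint_inner_left _ _ _
      _ = ⟪x, u (t + s)⟫ := by
          rw [hu]
          simp only [hsg t s, ContinuousLinearMap.mul_apply]
  -- A commutes with E t
  have hcomm : ∀ t : ℝ, A * E t = E t * A := by
    intro t
    exact (((Commute.refl A).neg_right.smul_right t).exp_right)
  -- derivative of the orbit
  have hderiv : ∀ t : ℝ, HasDerivAt u (-(A (u t))) t := by
    intro t
    have h1 : HasDerivAt E (E t * (-A)) t := hasDerivAt_exp_smul_const (-A) t
    have h2 := h1.clm_apply (hasDerivAt_const t x)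
    have h3 : (E t * (-A)) x + (E t) 0 = -(A (u t)) := by
      have : (E t * (-A)) x = -((E t * A) x) := by
        simp [ContinuousLinearMap.mul_apply]
      rw [map_zero, add_zero, this, ← hcomm t]
      simp [ContinuousLinearMap.mul_apply, hu]
    rw [h3] at h2
    exact h2
  -- the energy f
  set f : ℝ → ℝ := fun t => ⟪u t, u t⟫ with hf
  have hAinner : ∀ v : X, ⟪A v, v⟫ = ⟪L v, L v⟫ := by
    intro v
    rw [hA, ContinuousLinearMap.comp_apply]
    exact ContinuousLinearMap.adjoint_inner_left L v (L v)
  have hfderiv : ∀ t : ℝ, HasDerivAt f (-(2 * ⟪L (u t), L (u t)⟫)) t := by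
    intro t
    have h1 := (hderiv t).inner ℝ (hderiv t)
    have h2 : ⟪u t, -(A (u t))⟫ + ⟪-(A (u t)), u t⟫ = -(2 * ⟪L (u t), L (u t)⟫) := by
      have e1 : ⟪u t, -(A (u t))⟫ = -⟪A (u t), u t⟫ := by
        rw [inner_neg_right, real_inner_comm]
      have e2 : ⟪-(A (u t)), u t⟫ = -⟪A (u t), u t⟫ := by rw [inner_neg_left]
      rw [e1, e2, hAinner]
      ring
    rw [h2] at h1
    exact h1
  have hfdiff : Differentiable ℝ f := fun t => (hfderiv t).differentiableAt
  have hanti : Antitone f := by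
    apply antitone_of_deriv_nonpos hfdiff
    intro t
    rw [(hfderiv t).deriv]
    have := real_inner_self_nonneg (x := L (u t))
    linarith
  have hbdd : BddBelow (Set.range f) := by
    refine ⟨0, ?_⟩
    rintro r ⟨t, rfl⟩
    exact real_inner_self_nonneg
  have hlim : Tendsto f atTop (𝓝 (⨅ t, f t)) := tendsto_atTop_ciInf hanti hbdd
  set c : ℝ := ⨅ t, f t with hc
  -- the squared distance identity
  have hdexp : ∀ t s : ℝ, ⟪u t - u s, u t - u s⟫ = f t + f s - 2 * f ((t + s) / 2) := by
    intro t s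
    have h1 : f ((t + s) / 2) = ⟪x, u (t + s)⟫ := by
      have hk := key ((t + s) / 2) ((t + s) / 2)
      have he : (t + s) / 2 + (t + s) / 2 = t + s := by ring
      rw [he] at hk
      simpa [hf] using hk
    have hk2 : ⟪u s, u t⟫ = ⟪x, u (t + s)⟫ := by rw [key s t, add_comm s t]
    rw [inner_sub_sub_self, key t s, hk2, h1]
    simp only [hf]
    ring
  -- Cauchy along atTop
  have hsq : Tendsto (fun p : ℝ × ℝ => ⟪u p.1 - u p.2, u p.1 - u p.2⟫)
      (atTop ×ˢ atTop) (𝓝 0) := by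
    have h1 : Tendsto (fun p : ℝ × ℝ => f p.1) (atTop ×ˢ atTop) (𝓝 c) :=
      hlim.comp tendsto_fst
    have h2 : Tendsto (fun p : ℝ × ℝ => f p.2) (atTop ×ˢ atTop) (𝓝 c) :=
      hlim.comp tendsto_snd
    have hmid : Tendsto (fun p : ℝ × ℝ => (p.1 + p.2) / 2) (atTop ×ˢ atTop) atTop := by
      exact (Filter.Tendsto.atTop_add_atTop tendsto_fst tendsto_snd).atTop_div_const (by norm_num)
    have h3 : Tendsto (fun p : ℝ × ℝ => f ((p.1 + p.2) / 2)) (atTop ×ˢ atTop) (𝓝 c) :=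
      hlim.comp hmid
    have h4 : Tendsto (fun p : ℝ × ℝ => f p.1 + f p.2 - 2 * f ((p.1 + p.2) / 2))
        (atTop ×ˢ atTop) (𝓝 (c + c - 2 * c)) := (h1.add h2).sub (h3.const_mul 2)
    have h5 : c + c - 2 * c = 0 := by ring
    rw [h5] at h4
    exact h4.congr (fun p => (hdexp p.1 p.2).symm)
  have hdist : Tendsto (fun p : ℝ × ℝ => dist (u p.1) (u p.2)) (atTop ×ˢ atTop) (𝓝 0) := by
    have h1 : ∀ p : ℝ × ℝ, dist (u p.1) (u p.2) =
        Real.sqrt (⟪u p.1 - u p.2, u p.1 - u p.2⟫) := by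
      intro p
      rw [real_inner_self_eq_norm_sq, Real.sqrt_sq (norm_nonneg _), dist_eq_norm]
    simp only [h1]
    have := (Real.continuous_sqrt.tendsto 0).comp hsq
    simpa [Function.comp_def] using this
  have hcauchy : Cauchy (Filter.map u atTop) := by
    rw [cauchy_map_iff]
    refine ⟨atTop_neBot, ?_⟩
    rw [tendsto_uniformity_iff_dist_tendsto_zero]
    exact hdist
  obtain ⟨z, hz⟩ := CompleteSpace.complete hcauchy
  have hz : Tendsto u atTop (𝓝 z) := hz
  -- the limit is a fixed point of the semigroup
  have hfix : ∀ s : ℝ, E s z = z := by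
    intro s
    have h1 : Tendsto (fun t => E s (u t)) atTop (𝓝 (E s z)) :=
      ((E s).continuous.tendsto z).comp hz
    have h2 : (fun t => E s (u t)) = fun t => u (s + t) := by
      funext t
      rw [hu]
      simp only [hsg s t, ContinuousLinearMap.mul_apply]
    have h3 : Tendsto (fun t => u (s + t)) atTop (𝓝 z) :=
      hz.comp (tendsto_atTop_add_const_left _ s tendsto_id)
    rw [h2] at h1
    exact tendsto_nhds_unique h1 h3
  -- hence A z = 0
  have hAz : A z = 0 := by
    have h1 : HasDerivAt (fun s : ℝ => E s z) ((E 0 * (-A)) z + (E 0) 0) 0 :=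
      (hasDerivAt_exp_smul_const (-A) 0).clm_apply (hasDerivAt_const 0 z)
    have h2 : (fun s : ℝ => E s z) = fun _ => z := funext hfix
    rw [h2] at h1
    have h3 : HasDerivAt (fun _ : ℝ => z) (0 : X) 0 := hasDerivAt_const 0 z
    have h4 := h1.unique h3
    have hE0 : E 0 = 1 := by rw [hE]; simp [exp_zero]
    rw [hE0] at h4
    simp only [one_mul, ContinuousLinearMap.one_apply, map_zero, add_zero,
      ContinuousLinearMap.neg_apply] at h4
    exact neg_eq_zero.mp h4
  have hLz : L z = 0 := by
    have h1 : ⟪L z, L z⟫ = 0 := by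
      rw [← hAinner z, hAz, inner_zero_left]
    exact inner_self_eq_zero.mp h1
  have hz0 : z = 0 := hL (by rw [hLz, map_zero])
  rw [hz0] at hz
  have := hz.norm
  simpa using this
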